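/- Let n ≥ 1, M ≥ 0, and let f : 2^[n] → [−M, M] be submodular. Then the Lovasz extension f̂ is 4M-Lipschitz with respect to the Euclidean norm on the cube: |f̂(x) − f̂(y)| ≤ 4M ‖x − y‖₂ for all x, y ∈ [0,1]^n. -/

import Mathlib

/-- A set function `f : 2^[n] → ℝ` is submodular. -/
def Submodular {n : ℕ} (f : Finset (Fin n) → ℝ) : Prop :=
  ∀ S' S : Finset (Fin n), S' ⊆ S → ∀ i ∉ S,
    f (insert i S) - f S ≤ f (insert i S') - f S'

/-- The Lovasz extension `f̂(x) = ∫₀¹ f({i : x_i ≥ τ}) dτ`. -/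
noncomputable def lovasz {n : ℕ} (f : Finset (Fin n) → ℝ) (x : Fin n → ℝ) : ℝ :=
  ∫ τ in (0:ℝ)..(1:ℝ), f (Finset.univ.filter (fun i => τ ≤ x i))

open Finset MeasureTheory

namespace StmtAux

variable {n : ℕ}

/-- The set of indices lexicographically above `i` (by `x`-value, ties by index). -/
noncomputable def Tset (x : Fin n → ℝ) (i : Fin n) : Finset (Fin n) :=
  univ.filter (fun j => x i < x j ∨ (x i = x j ∧ i < j))

lemma mem_Tset_iff {x : Fin n → ℝ} {i j : Fin n} :
    j ∈ Tset x i ↔ toLex (x i, i) < toLex (x j, j) := by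
  simp [Tset, Prod.Lex.lt_iff]

lemma not_mem_Tset (x : Fin n → ℝ) (i : Fin n) : i ∉ Tset x i := by
  simp [Tset]

lemma le_of_mem_Tset {x : Fin n → ℝ} {i j : Fin n} (h : j ∈ Tset x i) : x i ≤ x j := by
  simp only [Tset, mem_filter] at h
  rcases h.2 with h | h
  · exact le_of_lt h
  · exact le_of_eq h.1

/-- In a nonempty finset there is a lexicographic minimum `a`: every other member is in
`Tset x a` and `a` is in no member's `Tset`. -/
lemma exists_lexmin (x : Fin n → ℝ) {D : Finset (Fin n)} (hne : D.Nonempty) :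
    ∃ a ∈ D, (∀ b ∈ D, b ≠ a → b ∈ Tset x a) ∧ (∀ b ∈ D, a ∉ Tset x b) := by
  obtain ⟨a, haD, ha⟩ := D.exists_min_image (fun i => toLex (x i, i)) hne
  refine ⟨a, haD, fun b hb hba => ?_, fun b hb hmem => ?_⟩
  · rw [mem_Tset_iff]
    refine lt_of_le_of_ne (ha b hb) ?_
    intro h
    exact hba (congrArg (fun p => (ofLex p).2) h.symm)
  · rw [mem_Tset_iff] at hmem
    exact absurd (ha b hb) (not_le_of_gt hmem)

/-- Chain upper bound: adding `D` to `B`, each marginal is at most the marginal at `Tset`. -/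
lemma chain_upper (f : Finset (Fin n) → ℝ) (hf : Submodular f) (x : Fin n → ℝ) :
    ∀ D B : Finset (Fin n), Disjoint D B → (∀ i ∈ D, Tset x i ⊆ B ∪ D) →
      f (B ∪ D) - f B ≤ ∑ i ∈ D, (f (insert i (Tset x i)) - f (Tset x i)) := by
  intro D
  induction D using Finset.strongInduction with
  | _ D ih =>
    intro B hdisj hT
    rcases D.eq_empty_or_nonempty with rfl | hne
    · simp
    obtain ⟨a, haD, hmin1, hmin2⟩ := exists_lexmin x hne
    set D' := D.erase a with hD'
    have haB : a ∉ B := (Finset.disjoint_left.1 hdisj) haD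
    have haD' : a ∉ D' := notMem_erase a D
    have haBD' : a ∉ B ∪ D' := by simp [haB, haD']
    have hBD : B ∪ D = insert a (B ∪ D') := by
      rw [hD', ← Finset.union_insert, insert_erase haD]
    have hTa : Tset x a ⊆ B ∪ D' := by
      intro j hj
      rcases mem_union.1 (hT a haD hj) with h | h
      · exact mem_union_left _ h
      · exact mem_union_right _ (mem_erase.2 ⟨fun hja => not_mem_Tset x a (hja ▸ hj), h⟩)
    have step : f (B ∪ D) - f (B ∪ D') ≤ f (insert a (Tset x a)) - f (Tset x a) := by
      rw [hBD]
      exact hf (Tset x a) (B ∪ D') hTa a haBD'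
    have hrec : f (B ∪ D') - f B ≤ ∑ i ∈ D', (f (insert i (Tset x i)) - f (Tset x i)) := by
      refine ih D' (erase_ssubset haD) B (hdisj.mono_left (erase_subset _ _)) ?_
      intro i hiD' j hj
      rcases mem_union.1 (hT i (mem_of_mem_erase hiD') hj) with h | h
      · exact mem_union_left _ h
      · exact mem_union_right _
          (mem_erase.2 ⟨fun hja => hmin2 i (mem_of_mem_erase hiD') (hja ▸ hj), h⟩)
    calc f (B ∪ D) - f B
        = (f (B ∪ D) - f (B ∪ D')) + (f (B ∪ D') - f B) := by ring
      _ ≤ (f (insert a (Tset x a)) - f (Tset x a))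
            + ∑ i ∈ D', (f (insert i (Tset x i)) - f (Tset x i)) := add_le_add step hrec
      _ = ∑ i ∈ D, (f (insert i (Tset x i)) - f (Tset x i)) :=
          Finset.add_sum_erase D (fun i => f (insert i (Tset x i)) - f (Tset x i)) haD

/-- Telescoping identity along the lexicographic chain. -/
lemma chain_eq (f : Finset (Fin n) → ℝ) (x : Fin n → ℝ) :
    ∀ Q : Finset (Fin n),
      f Q - f ∅ = ∑ i ∈ Q, (f (insert i (Q ∩ Tset x i)) - f (Q ∩ Tset x i)) := by
  intro Q
  induction Q using Finset.strongInduction with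
  | _ Q ih =>
    rcases Q.eq_empty_or_nonempty with rfl | hne
    · simp
    obtain ⟨a, haQ, hmin1, hmin2⟩ := exists_lexmin x hne
    set Q' := Q.erase a with hQ'
    have hQTa : Q ∩ Tset x a = Q' := by
      apply Finset.Subset.antisymm
      · intro j hj
        rcases mem_inter.1 hj with ⟨h1, h2⟩
        exact mem_erase.2 ⟨fun hja => not_mem_Tset x a (hja ▸ h2), h1⟩
      · intro j hj
        exact mem_inter.2 ⟨mem_of_mem_erase hj,
          hmin1 j (mem_of_mem_erase hj) (mem_erase.1 hj).1⟩
    have hQT : ∀ i ∈ Q', Q ∩ Tset x i = Q' ∩ Tset x i := by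
      intro i hi
      ext j
      simp only [mem_inter, hQ', mem_erase]
      constructor
      · rintro ⟨h1, h2⟩
        exact ⟨⟨fun hja => hmin2 i (mem_of_mem_erase hi) (hja ▸ h2), h1⟩, h2⟩
      · rintro ⟨⟨_, h1⟩, h2⟩
        exact ⟨h1, h2⟩
    have hins : insert a Q' = Q := insert_erase haQ
    calc f Q - f ∅ = (f (insert a (Q ∩ Tset x a)) - f (Q ∩ Tset x a)) + (f Q' - f ∅) := by
          rw [hQTa, hins]; ring
      _ = (f (insert a (Q ∩ Tset x a)) - f (Q ∩ Tset x a))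
            + ∑ i ∈ Q', (f (insert i (Q' ∩ Tset x i)) - f (Q' ∩ Tset x i)) := by
          rw [ih Q' (erase_ssubset haQ)]
      _ = (f (insert a (Q ∩ Tset x a)) - f (Q ∩ Tset x a))
            + ∑ i ∈ Q', (f (insert i (Q ∩ Tset x i)) - f (Q ∩ Tset x i)) := by
          congr 1
          exact (Finset.sum_congr rfl (fun i hi => by rw [hQT i hi])).symm
      _ = ∑ i ∈ Q, (f (insert i (Q ∩ Tset x i)) - f (Q ∩ Tset x i)) :=
          Finset.add_sum_erase Q (fun i => f (insert i (Q ∩ Tset x i)) - f (Q ∩ Tset x i)) haQ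

/-- Sum of positive parts of chain marginals is at most `2M`. -/
lemma sum_pos_marginals (f : Finset (Fin n) → ℝ) (hf : Submodular f) (M : ℝ)
    (hrange : ∀ S : Finset (Fin n), f S ∈ Set.Icc (-M) M) (x : Fin n → ℝ) :
    ∑ i : Fin n, max (f (insert i (Tset x i)) - f (Tset x i)) 0 ≤ 2 * M := by
  set u := fun i => f (insert i (Tset x i)) - f (Tset x i) with hu
  set P := univ.filter (fun i => 0 < u i) with hP
  have h1 : ∑ i : Fin n, max (u i) 0 = ∑ i ∈ P, u i := by
    rw [← Finset.sum_filter_add_sum_filter_not univ (fun i => 0 < u i) (fun i => max (u i) 0)]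
    have e1 : ∑ i ∈ P, max (u i) 0 = ∑ i ∈ P, u i :=
      Finset.sum_congr rfl (fun i hi => max_eq_left (le_of_lt (mem_filter.1 hi).2))
    have e2 : ∑ i ∈ univ.filter (fun i => ¬ 0 < u i), max (u i) 0 = 0 := by
      refine Finset.sum_eq_zero (fun i hi => ?_)
      exact max_eq_right (le_of_not_gt (mem_filter.1 hi).2)
    rw [e1, e2, add_zero]
  have h2 : ∑ i ∈ P, u i ≤ f P - f ∅ := by
    rw [chain_eq f x P]
    refine Finset.sum_le_sum (fun i hi => ?_)
    exact hf (P ∩ Tset x i) (Tset x i) Finset.inter_subset_right i (not_mem_Tset x i)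
  have h3 : f P - f ∅ ≤ 2 * M := by
    have := (hrange P).2
    have := (hrange ∅).1
    linarith
  linarith


/-- Measurability of the Lovasz integrand. -/
lemma meas_aux (f : Finset (Fin n) → ℝ) (x : Fin n → ℝ) :
    Measurable (fun τ : ℝ => f (univ.filter (fun i => τ ≤ x i))) := by
  have heq : (fun τ : ℝ => f (univ.filter (fun i => τ ≤ x i)))
      = fun τ => ∑ S : Finset (Fin n),
          if univ.filter (fun i => τ ≤ x i) = S then f S else 0 := by
    funext τ
    rw [Finset.sum_ite_eq univ (univ.filter (fun i => τ ≤ x i)) f]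
    simp
  rw [heq]
  refine Finset.measurable_sum _ (fun S _ => ?_)
  refine Measurable.ite ?_ measurable_const measurable_const
  have hset : {τ : ℝ | univ.filter (fun i => τ ≤ x i) = S}
      = ⋂ i : Fin n, {τ : ℝ | (τ ≤ x i ↔ i ∈ S)} := by
    ext τ
    simp [Finset.ext_iff, Set.mem_iInter]
  rw [hset]
  refine MeasurableSet.iInter (fun i => ?_)
  by_cases h : i ∈ S
  · simp only [h, iff_true]
    exact measurableSet_Iic
  · simp only [h, iff_false, not_le]
    exact measurableSet_Ioi

lemma intble (f : Finset (Fin n) → ℝ) (M : ℝ)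
    (hrange : ∀ S : Finset (Fin n), f S ∈ Set.Icc (-M) M) (x : Fin n → ℝ) :
    IntervalIntegrable (fun τ : ℝ => f (univ.filter (fun i => τ ≤ x i))) volume 0 1 := by
  rw [intervalIntegrable_iff]
  refine Integrable.mono' (g := fun _ => M) ?_ ((meas_aux f x).aestronglyMeasurable.restrict) ?_
  · exact integrableOn_const (by rw [Set.uIoc_of_le zero_le_one]; exact measure_Ioc_lt_top.ne)
  · refine Filter.Eventually.of_forall (fun τ => ?_)
    have h := hrange (univ.filter (fun i => τ ≤ x i))
    rw [Real.norm_eq_abs, abs_le]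
    exact ⟨h.1, h.2⟩

lemma ind_int (a b c : ℝ) :
    IntervalIntegrable (Set.indicator (Set.Ioc a b) (fun _ => c)) volume 0 1 := by
  rw [intervalIntegrable_iff]
  refine Integrable.indicator ?_ measurableSet_Ioc
  exact integrableOn_const (by rw [Set.uIoc_of_le zero_le_one]; exact measure_Ioc_lt_top.ne)

/-- Upper Lipschitz bound for a monotone pair. -/
lemma lovasz_upper (f : Finset (Fin n) → ℝ) (hf : Submodular f) (M : ℝ)
    (hrange : ∀ S : Finset (Fin n), f S ∈ Set.Icc (-M) M)
    (x z : Fin n → ℝ) (h0 : ∀ i, 0 ≤ z i) (hzx : ∀ i, z i ≤ x i) (h1 : ∀ i, x i ≤ 1)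
    (ε : ℝ) (hε0 : 0 ≤ ε) (hε : ∀ i, x i - z i ≤ ε) :
    lovasz f x - lovasz f z ≤ 2 * M * ε := by
  set u := fun i => f (insert i (Tset x i)) - f (Tset x i) with hu
  set G := fun τ : ℝ => ∑ i : Fin n,
      Set.indicator (Set.Ioc (z i) (x i)) (fun _ => max (u i) 0) τ with hG
  have hfx := intble f M hrange x
  have hfz := intble f M hrange z
  have hGint : IntervalIntegrable G volume 0 1 := by
    have hGeq : G = ∑ i : Fin n, Set.indicator (Set.Ioc (z i) (x i)) (fun _ => max (u i) 0) := by
      funext τ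
      rw [hG, Finset.sum_apply]
    rw [hGeq]
    exact IntervalIntegrable.sum univ (fun i _ => ind_int (z i) (x i) (max (u i) 0))
  have key : ∀ τ : ℝ,
      f (univ.filter (fun i => τ ≤ x i)) - f (univ.filter (fun i => τ ≤ z i)) ≤ G τ := by
    intro τ
    set B := univ.filter (fun i => τ ≤ z i) with hB
    set D := univ.filter (fun i => τ ≤ x i ∧ ¬ τ ≤ z i) with hD
    have hBD : B ∪ D = univ.filter (fun i => τ ≤ x i) := by
      ext j
      simp only [hB, hD, mem_union, mem_filter, mem_univ, true_and]
      constructor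
      · rintro (h | h)
        · exact le_trans h (hzx j)
        · exact h.1
      · intro h
        by_cases hz : τ ≤ z j
        · exact Or.inl hz
        · exact Or.inr ⟨h, hz⟩
    have hdisj : Disjoint D B := by
      rw [Finset.disjoint_left]
      intro i hi hiB
      exact (mem_filter.1 hi).2.2 (mem_filter.1 hiB).2
    have hT : ∀ i ∈ D, Tset x i ⊆ B ∪ D := by
      intro i hi j hj
      rw [hBD, mem_filter]
      exact ⟨mem_univ j, le_trans (mem_filter.1 hi).2.1 (le_of_mem_Tset hj)⟩
    have hchain := chain_upper f hf x D B hdisj hT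
    rw [hBD] at hchain
    refine hchain.trans ?_
    calc ∑ i ∈ D, (f (insert i (Tset x i)) - f (Tset x i))
        ≤ ∑ i ∈ D, max (u i) 0 := Finset.sum_le_sum (fun i _ => le_max_left _ _)
      _ = ∑ i : Fin n, if τ ≤ x i ∧ ¬ τ ≤ z i then max (u i) 0 else 0 := by
          rw [hD, Finset.sum_filter]
      _ = G τ := by
          refine Finset.sum_congr rfl (fun i _ => ?_)
          rw [Set.indicator_apply]
          by_cases h : τ ∈ Set.Ioc (z i) (x i)
          · rw [if_pos h, if_pos ⟨h.2, not_le.2 h.1⟩]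
          · rw [if_neg h, if_neg (fun hc => h (Set.mem_Ioc.2 ⟨not_le.1 hc.2, hc.1⟩))]
  have hsub : lovasz f x - lovasz f z = ∫ τ in (0:ℝ)..1,
      (f (univ.filter (fun i => τ ≤ x i)) - f (univ.filter (fun i => τ ≤ z i))) :=
    (intervalIntegral.integral_sub hfx hfz).symm
  have hmono : lovasz f x - lovasz f z ≤ ∫ τ in (0:ℝ)..1, G τ := by
    rw [hsub]
    exact intervalIntegral.integral_mono_on zero_le_one (hfx.sub hfz) hGint
      (fun τ _ => key τ)
  have hGval : ∫ τ in (0:ℝ)..1, G τ = ∑ i : Fin n, max (u i) 0 * (x i - z i) := by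
    rw [hG, intervalIntegral.integral_finset_sum
      (fun i _ => ind_int (z i) (x i) (max (u i) 0))]
    refine Finset.sum_congr rfl (fun i _ => ?_)
    rw [intervalIntegral.integral_of_le zero_le_one,
      MeasureTheory.setIntegral_indicator measurableSet_Ioc]
    have hsub2 : Set.Ioc (0:ℝ) 1 ∩ Set.Ioc (z i) (x i) = Set.Ioc (z i) (x i) :=
      Set.inter_eq_self_of_subset_right (Set.Ioc_subset_Ioc (h0 i) (h1 i))
    rw [hsub2, MeasureTheory.setIntegral_const, Real.volume_real_Ioc_of_le (hzx i),
      smul_eq_mul, mul_comm]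
  have hfinal : ∑ i : Fin n, max (u i) 0 * (x i - z i) ≤ 2 * M * ε := by
    calc ∑ i : Fin n, max (u i) 0 * (x i - z i)
        ≤ ∑ i : Fin n, max (u i) 0 * ε :=
          Finset.sum_le_sum (fun i _ =>
            mul_le_mul_of_nonneg_left (hε i) (le_max_right (u i) 0))
      _ = (∑ i : Fin n, max (u i) 0) * ε := by rw [← Finset.sum_mul]
      _ ≤ 2 * M * ε :=
          mul_le_mul_of_nonneg_right (sum_pos_marginals f hf M hrange x) hε0
  rw [hGval] at hmono
  exact hmono.trans hfinal


/-- Complement of a submodular function is submodular. -/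
lemma compl_submod {f : Finset (Fin n) → ℝ} (hf : Submodular f) :
    Submodular (fun S => f Sᶜ) := by
  intro S' S hSS i hiS
  have hiS' : i ∉ S' := fun h => hiS (hSS h)
  simp only
  have e1 : (insert i S)ᶜ = Sᶜ.erase i := Finset.compl_insert
  have e1' : (insert i S')ᶜ = S'ᶜ.erase i := Finset.compl_insert
  have hiA : i ∉ Sᶜ.erase i := notMem_erase _ _
  have hiA' : i ∉ S'ᶜ.erase i := notMem_erase _ _
  have hSc : Sᶜ = insert i (Sᶜ.erase i) := (insert_erase (Finset.mem_compl.2 hiS)).symm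
  have hS'c : S'ᶜ = insert i (S'ᶜ.erase i) := (insert_erase (Finset.mem_compl.2 hiS')).symm
  have hAA' : Sᶜ.erase i ⊆ S'ᶜ.erase i :=
    Finset.erase_subset_erase i (Finset.compl_subset_compl.2 hSS)
  have hkey := hf (Sᶜ.erase i) (S'ᶜ.erase i) hAA' i hiA'
  rw [e1, e1']
  nth_rewrite 2 [hSc]
  nth_rewrite 2 [hS'c]
  linarith

/-- Reflection identity: `lovasz f x = lovasz (f ∘ compl) (1 - x)`. -/
lemma lovasz_reflect (f : Finset (Fin n) → ℝ) (x : Fin n → ℝ) :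
    lovasz (fun S => f Sᶜ) (fun i => 1 - x i) = lovasz f x := by
  unfold lovasz
  have h1 : ∀ τ : ℝ, (univ.filter (fun i => τ ≤ 1 - x i))ᶜ
      = univ.filter (fun i => 1 - τ < x i) := by
    intro τ
    ext j
    simp only [Finset.mem_compl, mem_filter, mem_univ, true_and, not_le]
    constructor
    · intro h; linarith
    · intro h; linarith
  have h2 : (fun τ : ℝ => f (univ.filter (fun i => τ ≤ 1 - x i))ᶜ)
      = fun τ : ℝ => (fun σ : ℝ => f (univ.filter (fun i => σ < x i))) (1 - τ) := by
    funext τ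
    rw [h1 τ]
  calc ∫ τ in (0:ℝ)..1, f (univ.filter (fun i => τ ≤ 1 - x i))ᶜ
      = ∫ τ in (0:ℝ)..1, (fun σ : ℝ => f (univ.filter (fun i => σ < x i))) (1 - τ) := by
        rw [h2]
    _ = ∫ σ in ((1:ℝ)-1)..((1:ℝ)-0), f (univ.filter (fun i => σ < x i)) :=
        intervalIntegral.integral_comp_sub_left (fun σ : ℝ => f (univ.filter (fun i => σ < x i))) 1
    _ = ∫ σ in (0:ℝ)..1, f (univ.filter (fun i => σ < x i)) := by norm_num
    _ = ∫ σ in (0:ℝ)..1, f (univ.filter (fun i => σ ≤ x i)) := by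
        refine intervalIntegral.integral_congr_ae ?_
        have hnull : (volume (⋃ i : Fin n, ({x i} : Set ℝ))) = 0 :=
          measure_iUnion_null (fun i => measure_singleton _)
        have hae : ∀ᵐ σ : ℝ, σ ∉ ⋃ i : Fin n, ({x i} : Set ℝ) :=
          MeasureTheory.measure_eq_zero_iff_ae_notMem.1 hnull
        filter_upwards [hae] with σ hσ _
        have hne : ∀ i, σ ≠ x i := by
          intro i h
          exact hσ (Set.mem_iUnion.2 ⟨i, h⟩)
        congr 1
        refine Finset.filter_congr (fun j _ => ?_)
        exact ⟨le_of_lt, fun h => lt_of_le_of_ne h (hne j)⟩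

/-- Lower Lipschitz bound for a monotone pair, by reflection. -/
lemma lovasz_lower (f : Finset (Fin n) → ℝ) (hf : Submodular f) (M : ℝ)
    (hrange : ∀ S : Finset (Fin n), f S ∈ Set.Icc (-M) M)
    (x z : Fin n → ℝ) (h0 : ∀ i, 0 ≤ z i) (hzx : ∀ i, z i ≤ x i) (h1 : ∀ i, x i ≤ 1)
    (ε : ℝ) (hε0 : 0 ≤ ε) (hε : ∀ i, x i - z i ≤ ε) :
    -(2 * M * ε) ≤ lovasz f x - lovasz f z := by
  have hg : Submodular (fun S : Finset (Fin n) => f Sᶜ) := compl_submod hf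
  have hgrange : ∀ S : Finset (Fin n), (fun S : Finset (Fin n) => f Sᶜ) S ∈ Set.Icc (-M) M :=
    fun S => hrange _
  have h := lovasz_upper (fun S : Finset (Fin n) => f Sᶜ) hg M hgrange
    (fun i => 1 - z i) (fun i => 1 - x i)
    (fun i => by show (0:ℝ) ≤ 1 - x i; linarith [h1 i])
    (fun i => by show (1:ℝ) - x i ≤ 1 - z i; linarith [hzx i])
    (fun i => by show (1:ℝ) - z i ≤ 1; linarith [h0 i])
    ε hε0 (fun i => by show (1:ℝ) - z i - (1 - x i) ≤ ε; linarith [hε i])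
  rw [lovasz_reflect f z, lovasz_reflect f x] at h
  linarith

end StmtAux


/-- The Lovasz extension of a submodular `f : 2^[n] → [−M,M]` is `4M`-Lipschitz with
respect to the Euclidean norm on the cube `[0,1]^n`. -/
theorem stmt3 {n : ℕ} (hn : 1 ≤ n) (M : ℝ) (hM : 0 ≤ M)
    (f : Finset (Fin n) → ℝ) (hf : Submodular f)
    (hrange : ∀ S : Finset (Fin n), f S ∈ Set.Icc (-M) M)
    (x y : Fin n → ℝ) (hx : ∀ i, x i ∈ Set.Icc (0:ℝ) 1) (hy : ∀ i, y i ∈ Set.Icc (0:ℝ) 1) :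
    |lovasz f x - lovasz f y| ≤ 4 * M * Real.sqrt (∑ i, (x i - y i) ^ 2) := by
  set R := Real.sqrt (∑ i, (x i - y i) ^ 2) with hR
  have hR0 : 0 ≤ R := Real.sqrt_nonneg _
  set m := fun i => min (x i) (y i) with hm
  have hm0 : ∀ i, 0 ≤ m i := fun i => le_min (hx i).1 (hy i).1
  have hmx : ∀ i, m i ≤ x i := fun i => min_le_left _ _
  have hmy : ∀ i, m i ≤ y i := fun i => min_le_right _ _
  have habs : ∀ i, |x i - y i| ≤ R := by
    intro i
    rw [hR, ← Real.sqrt_sq_eq_abs]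
    exact Real.sqrt_le_sqrt (Finset.single_le_sum
      (fun j _ => sq_nonneg (x j - y j)) (Finset.mem_univ i))
  have hxm : ∀ i, x i - m i ≤ R := by
    intro i
    rcases le_total (x i) (y i) with h | h
    · rw [hm]; simp only [min_eq_left h]; linarith
    · have : m i = y i := min_eq_right h
      rw [this]
      exact (le_abs_self _).trans (habs i)
  have hym : ∀ i, y i - m i ≤ R := by
    intro i
    rcases le_total (y i) (x i) with h | h
    · rw [hm]; simp only [min_eq_right h]; linarith
    · have : m i = x i := min_eq_left h
      rw [this]
      calc y i - x i ≤ |x i - y i| := by rw [abs_sub_comm]; exact le_abs_self _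
        _ ≤ R := habs i
  have h1 := StmtAux.lovasz_upper f hf M hrange x m hm0 hmx (fun i => (hx i).2) R hR0 hxm
  have h2 := StmtAux.lovasz_lower f hf M hrange x m hm0 hmx (fun i => (hx i).2) R hR0 hxm
  have h3 := StmtAux.lovasz_upper f hf M hrange y m hm0 hmy (fun i => (hy i).2) R hR0 hym
  have h4 := StmtAux.lovasz_lower f hf M hrange y m hm0 hmy (fun i => (hy i).2) R hR0 hym
  rw [abs_le]
  constructor <;> nlinarith [h1, h2, h3, h4]
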